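/- The map (q, Q) ↦ [[q a q̄, q c],[q b q̄, q d]] defines a group action of the unit quaternions S^3 on Sp(2): it preserves the condition Q̄ᵀ Q = id, sends 1 to the identity transformation, and is compatible with multiplication in S^3. -/

import Mathlib

open Matrix

/-- The Gromoll–Meyer action of a quaternion q on a 2×2 quaternionic matrix:
q·[[a,c],[b,d]] = [[q a q̄, q c],[q b q̄, q d]]. -/
noncomputable def gmAct (q : Quaternion ℝ) (Q : Matrix (Fin 2) (Fin 2) (Quaternion ℝ)) :
    Matrix (Fin 2) (Fin 2) (Quaternion ℝ) :=
  Matrix.of ![![q * Q 0 0 * star q, q * Q 0 1], ![q * Q 1 0 * star q, q * Q 1 1]]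

/-- gmAct defines an action of the unit quaternions S³ on Sp(2):
it preserves Q̄ᵀQ = id, the identity of S³ acts trivially, and it is
compatible with multiplication. -/
theorem gmAct_is_action :
    (∀ (q : Quaternion ℝ), star q * q = 1 → q * star q = 1 →
      ∀ Q : Matrix (Fin 2) (Fin 2) (Quaternion ℝ), Qᴴ * Q = 1 →
        (gmAct q Q)ᴴ * gmAct q Q = 1) ∧
    (∀ Q : Matrix (Fin 2) (Fin 2) (Quaternion ℝ), gmAct 1 Q = Q) ∧
    (∀ (q₁ q₂ : Quaternion ℝ), star q₁ * q₁ = 1 → star q₂ * q₂ = 1 →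
      ∀ Q : Matrix (Fin 2) (Fin 2) (Quaternion ℝ),
        gmAct (q₁ * q₂) Q = gmAct q₁ (gmAct q₂ Q)) := by
  refine ⟨?_, ?_, ?_⟩
  · intro q hsq hqs Q hQ
    have cancel : ∀ x : Quaternion ℝ, star q * (q * x) = x := fun x => by
      rw [← mul_assoc, hsq, one_mul]
    have key1 : ∀ x y : Quaternion ℝ,
        (q * x * star q) * (q * y * star q) = q * (x * y) * star q := by
      intro x y
      rw [mul_assoc (q * x) (star q), ← mul_assoc (star q) (q * y), ← mul_assoc (star q) q,
        hsq, one_mul, ← mul_assoc, mul_assoc q x y]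
    have key2 : ∀ x y : Quaternion ℝ, (q * x * star q) * (q * y) = q * (x * y) := by
      intro x y
      rw [mul_assoc (q * x) (star q), cancel, mul_assoc]
    have key3 : ∀ x y : Quaternion ℝ,
        (x * star q) * (q * y * star q) = (x * y) * star q := by
      intro x y
      rw [mul_assoc x (star q), ← mul_assoc (star q) (q * y), ← mul_assoc (star q) q,
        hsq, one_mul, ← mul_assoc]
    have key4 : ∀ x y : Quaternion ℝ, (x * star q) * (q * y) = x * y := by
      intro x y
      rw [mul_assoc x (star q), cancel]
    have h00 := congrFun (congrFun hQ 0) 0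
    have h01 := congrFun (congrFun hQ 0) 1
    have h10 := congrFun (congrFun hQ 1) 0
    have h11 := congrFun (congrFun hQ 1) 1
    simp [Matrix.mul_apply, Fin.sum_univ_two, Matrix.conjTranspose_apply,
      Matrix.one_apply] at h00 h01 h10 h11
    refine Matrix.ext fun i j => ?_
    fin_cases i <;> fin_cases j <;>
      simp only [Matrix.mul_apply, Fin.sum_univ_two, Matrix.conjTranspose_apply,
        Matrix.one_apply, gmAct, Matrix.of_apply, Fin.mk_zero, Fin.mk_one,
        Matrix.cons_val', Matrix.cons_val_zero,
        Matrix.cons_val_one, Matrix.head_cons, Matrix.head_fin_const,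
        Matrix.empty_val', Matrix.cons_val_fin_one, StarMul.star_mul, star_star]
    · rw [← mul_assoc q (star (Q 0 0)), ← mul_assoc q (star (Q 1 0)), key1, key1,
        ← add_mul, ← mul_add, h00, mul_one, hqs]
      simp
    · rw [← mul_assoc q (star (Q 0 0)), ← mul_assoc q (star (Q 1 0)), key2, key2,
        ← mul_add, h01, mul_zero]
      simp
    · rw [key3, key3, ← add_mul, h10, zero_mul]
      simp
    · rw [key4, key4, h11]
      simp
  · intro Q
    refine Matrix.ext fun i j => ?_
    fin_cases i <;> fin_cases j <;> simp [gmAct]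
  · intro q₁ q₂ h1 h2 Q
    refine Matrix.ext fun i j => ?_
    fin_cases i <;> fin_cases j <;>
      simp [gmAct, StarMul.star_mul, mul_assoc]
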